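/- Let δ_1,...,δ_n and δ̃_1,...,δ̃_n be two sequences in {0,1} differing in at most k positions, with Kaplan-Meier weights w and w̃ defined from them respectively (in product form w_i = (δ_i/n)∏_{j<i}((n-j+1)/(n-j))^{1-δ_j}). Then for any index r with k+1 ≤ r ≤ n−k such that δ_r = δ̃_r and the sets of indices j < r where the sequences differ has size at most k contained in {r−k,...,r+k−1} ∩ {1,...,r−1}, it holds that |w_r − w̃_r| ≤ w̃_r · k/(n − r − k + 1). -/
import Mathlib

/-- Telescoping product for consecutive ratio factors. -/
lemma km_tel (n a : ℕ) : ∀ m : ℕ, a + m < n →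
    ∏ j ∈ Finset.Icc a (a + m), (((n : ℝ) - j + 1) / ((n : ℝ) - j))
      = ((n : ℝ) - a + 1) / ((n : ℝ) - (a + m)) := by
  intro m
  induction m with
  | zero => intro h; simp
  | succ m ih =>
    intro h
    have h1 : a + m < n := by omega
    have h2 : (n : ℝ) - ((a : ℝ) + m) ≠ 0 := by
      have : ((a : ℝ) + m) < n := by exact_mod_cast h1
      linarith
    have h3 : (n : ℝ) - ((a : ℝ) + m + 1) ≠ 0 := by
      have : ((a : ℝ) + m + 1) < n := by exact_mod_cast h
      linarith
    rw [show a + (m + 1) = (a + m) + 1 from rfl,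
      Finset.prod_Icc_succ_top (by omega : a ≤ (a + m) + 1), ih h1]
    push_cast
    rw [show (n:ℝ) - ((a:ℝ) + ↑m + 1) + 1 = (n:ℝ) - ((a:ℝ) + ↑m) by ring,
      div_mul_div_comm, mul_comm ((n:ℝ) - ((a:ℝ)+↑m)) ((n:ℝ) - ((a:ℝ)+↑m+1))]
    rw [mul_div_mul_right _ _ h2]
    ring_nf

/-- Proximity of Kaplan-Meier weights on contaminated and clean samples: if the
censoring indicator sequences `δ, δ̃ ∈ {0,1}` differ in at most `k` positions, and
`r` is an index with `k+1 ≤ r ≤ n-k`, `δ_r = δ̃_r`, whose set of differing indices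
`j < r` has size at most `k` and is contained in `{r-k,…,r+k-1} ∩ {1,…,r-1}`, then
`|w_r - w̃_r| ≤ w̃_r · k/(n - r - k + 1)` for the product-form weights. -/
theorem km_weights_proximity (n k : ℕ) (hk : 1 ≤ k) (δ δt : ℕ → ℕ)
    (hδ : ∀ i, δ i ≤ 1) (hδt : ∀ i, δt i ≤ 1)
    (hdiff : ((Finset.Icc 1 n).filter fun i => δ i ≠ δt i).card ≤ k)
    (r : ℕ) (hr1 : k + 1 ≤ r) (hr2 : r + k ≤ n)
    (hre : δ r = δt r)
    (hsub : ((Finset.Icc 1 (r - 1)).filter fun j => δ j ≠ δt j)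
      ⊆ Finset.Icc (r - k) (r + k - 1) ∩ Finset.Icc 1 (r - 1))
    (hcard : ((Finset.Icc 1 (r - 1)).filter fun j => δ j ≠ δt j).card ≤ k) :
    |(δ r : ℝ) / n *
        (∏ j ∈ Finset.Icc 1 (r - 1), (((n : ℝ) - j + 1) / ((n : ℝ) - j)) ^ (1 - δ j))
      - (δt r : ℝ) / n *
        (∏ j ∈ Finset.Icc 1 (r - 1), (((n : ℝ) - j + 1) / ((n : ℝ) - j)) ^ (1 - δt j))|
      ≤ ((δt r : ℝ) / n *
          (∏ j ∈ Finset.Icc 1 (r - 1), (((n : ℝ) - j + 1) / ((n : ℝ) - j)) ^ (1 - δt j)))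
        * k / ((n : ℝ) - r - k + 1) := by
  set c : ℕ → ℝ := fun j => ((n : ℝ) - j + 1) / ((n : ℝ) - j) with hc
  have hcpos : ∀ j ∈ Finset.Icc 1 (r - 1), 0 < c j := by
    intro j hj
    simp only [Finset.mem_Icc] at hj
    have hjn : (j : ℝ) < n := by exact_mod_cast (show j < n by omega)
    have hd : 0 < (n : ℝ) - j := by linarith
    exact div_pos (by linarith) hd
  have hc1 : ∀ j ∈ Finset.Icc 1 (r - 1), 1 ≤ c j := by
    intro j hj
    simp only [Finset.mem_Icc] at hj
    have hjn : (j : ℝ) < n := by exact_mod_cast (show j < n by omega)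
    have hd : 0 < (n : ℝ) - j := by linarith
    rw [hc]
    rw [le_div_iff₀ hd]
    linarith
  set P : ℝ := ∏ j ∈ Finset.Icc 1 (r - 1), c j ^ (1 - δ j) with hP
  set Pt : ℝ := ∏ j ∈ Finset.Icc 1 (r - 1), c j ^ (1 - δt j) with hPt
  set M : ℝ := ∏ j ∈ Finset.Icc (r - k) (r - 1), c j with hM
  have hIccsub : Finset.Icc (r - k) (r - 1) ⊆ Finset.Icc 1 (r - 1) := by
    intro j hj
    simp only [Finset.mem_Icc] at hj ⊢
    omega
  have hPpos : 0 < P := Finset.prod_pos fun j hj => pow_pos (hcpos j hj) _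
  have hPtpos : 0 < Pt := Finset.prod_pos fun j hj => pow_pos (hcpos j hj) _
  have hM1 : 1 ≤ M := by
    rw [hM]
    calc (1 : ℝ) = ∏ _j ∈ Finset.Icc (r - k) (r - 1), (1 : ℝ) := by simp
      _ ≤ ∏ j ∈ Finset.Icc (r - k) (r - 1), c j :=
        Finset.prod_le_prod (fun j hj => zero_le_one)
          (fun j hj => hc1 j (hIccsub hj))
  have hDsub : ((Finset.Icc 1 (r - 1)).filter fun j => δ j ≠ δt j)
      ⊆ Finset.Icc (r - k) (r - 1) := by
    intro j hj
    have := hsub hj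
    simp only [Finset.mem_inter, Finset.mem_Icc] at this ⊢
    omega
  -- key comparison lemma (applied in both directions)
  have key : ∀ a b : ℕ → ℕ, (∀ i, a i ≤ 1) → (∀ i, b i ≤ 1) →
      (∀ i, δ i = δt i → a i = b i) →
      (∏ j ∈ Finset.Icc 1 (r - 1), c j ^ (1 - a j))
        ≤ (∏ j ∈ Finset.Icc 1 (r - 1), c j ^ (1 - b j)) * M := by
    intro a b ha hb hab
    have step : (∏ j ∈ Finset.Icc 1 (r - 1), c j ^ (1 - a j))
        ≤ ∏ j ∈ Finset.Icc 1 (r - 1),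
            (c j ^ (1 - b j) * if δ j ≠ δt j then c j else 1) := by
      apply Finset.prod_le_prod
      · intro j hj; exact pow_nonneg (le_of_lt (hcpos j hj)) _
      · intro j hj
        by_cases hd : δ j ≠ δt j
        · rw [if_pos hd]
          have h0 : (1 : ℝ) ≤ c j ^ (1 - b j) :=
            one_le_pow₀ (hc1 j hj)
          have h1 : c j ^ (1 - a j) ≤ c j := by
            calc c j ^ (1 - a j) ≤ c j ^ 1 :=
              pow_le_pow_right₀ (hc1 j hj) (by omega)
            _ = c j := pow_one _
          have h2 : c j ≤ c j ^ (1 - b j) * c j := by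
            nlinarith [hcpos j hj]
          linarith
        · rw [if_neg hd, hab j (not_not.mp hd), mul_one]
    calc (∏ j ∈ Finset.Icc 1 (r - 1), c j ^ (1 - a j))
        ≤ ∏ j ∈ Finset.Icc 1 (r - 1),
            (c j ^ (1 - b j) * if δ j ≠ δt j then c j else 1) := step
      _ = (∏ j ∈ Finset.Icc 1 (r - 1), c j ^ (1 - b j)) *
            ∏ j ∈ Finset.Icc 1 (r - 1), (if δ j ≠ δt j then c j else 1) := by
          rw [Finset.prod_mul_distrib]
      _ ≤ (∏ j ∈ Finset.Icc 1 (r - 1), c j ^ (1 - b j)) * M := by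
          apply mul_le_mul_of_nonneg_left _ (le_of_lt (Finset.prod_pos
            fun j hj => pow_pos (hcpos j hj) _))
          calc (∏ j ∈ Finset.Icc 1 (r - 1), (if δ j ≠ δt j then c j else 1))
              ≤ ∏ j ∈ Finset.Icc 1 (r - 1),
                  (if j ∈ Finset.Icc (r - k) (r - 1) then c j else 1) := by
                apply Finset.prod_le_prod
                · intro j hj; split_ifs
                  exacts [le_of_lt (hcpos j hj), zero_le_one]
                · intro j hj
                  by_cases hd : δ j ≠ δt j
                  · rw [if_pos hd, if_pos (hDsub (Finset.mem_filter.mpr ⟨hj, hd⟩))]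
                  · rw [if_neg hd]
                    split_ifs with hm
                    · exact hc1 j hj
                    · exact le_refl 1
            _ = M := by
                rw [Finset.prod_ite_mem, Finset.inter_eq_right.mpr hIccsub, hM]
  have hPM : P ≤ Pt * M := key δ δt hδ hδt fun i h => h
  have hPtM : Pt ≤ P * M := key δt δ hδt hδ fun i h => h.symm
  have habs : |P - Pt| ≤ Pt * (M - 1) := by
    rw [abs_le]
    constructor
    · nlinarith [sq_nonneg (M - 1)]
    · nlinarith
  have hden1 : (0 : ℝ) < (n : ℝ) - ((r : ℝ) - 1) := by
    have : (r : ℝ) ≤ n := by exact_mod_cast (show r ≤ n by omega)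
    linarith
  have hden2 : (0 : ℝ) < (n : ℝ) - r - k + 1 := by
    have : ((r + k : ℕ) : ℝ) ≤ n := by exact_mod_cast hr2
    push_cast at this; linarith
  have hMval : M = ((n : ℝ) - ((r : ℝ) - k) + 1) / ((n : ℝ) - ((r : ℝ) - 1)) := by
    rw [hM, show r - 1 = (r - k) + (k - 1) by omega]
    simp only [hc]
    rw [km_tel n (r - k) (k - 1) (by omega)]
    rw [Nat.cast_sub (show k ≤ r by omega), Nat.cast_sub (show 1 ≤ k by omega)]
    ring_nf
  have hMbound : M - 1 ≤ (k : ℝ) / ((n : ℝ) - r - k + 1) := by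
    rw [hMval, div_sub_one (ne_of_gt hden1),
      show (n : ℝ) - ((r : ℝ) - k) + 1 - ((n : ℝ) - ((r : ℝ) - 1)) = (k : ℝ) by ring]
    apply div_le_div_of_nonneg_left (by positivity) hden2 (by linarith)
  have hkey : |P - Pt| ≤ Pt * k / ((n : ℝ) - r - k + 1) := by
    calc |P - Pt| ≤ Pt * (M - 1) := habs
      _ ≤ Pt * ((k : ℝ) / ((n : ℝ) - r - k + 1)) :=
          mul_le_mul_of_nonneg_left hMbound (le_of_lt hPtpos)
      _ = Pt * k / ((n : ℝ) - r - k + 1) := by ring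
  rw [hre, ← mul_sub, abs_mul]
  have hnn : |(δt r : ℝ) / n| = (δt r : ℝ) / n := abs_of_nonneg (by positivity)
  rw [hnn, show ((δt r : ℝ) / n * Pt) * k / ((n : ℝ) - r - k + 1)
    = ((δt r : ℝ) / n) * (Pt * k / ((n : ℝ) - r - k + 1)) by ring]
  exact mul_le_mul_of_nonneg_left hkey (by positivity)
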